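/- Suppose T : ℕ → (ℝ × ℝ × ℝ → ℂ) satisfies T₁(u,v,w) = w and, for all k ≥ 1 and all u, v, w with v ≠ 0, T_{k+1}(u,v,w) = w·T_k(u,v,w) + ((w − (u+iv)/2)^k − (w − (u−iv)/2)^k)/(i·v) · (u²+v²)/4. Then for every integer k ≥ 1 and every real θ with sin(θ/2) ≠ 0 and sin(kθ/2) ≠ 0, setting φ = kθ/2 and w = −(1/2)·sin((k−1)θ/2)/sin(θ/2), one has T_k(cos φ, sin φ, w) = 0. -/

import Mathlib

private lemma tangential_step (w Cφ S Tj : ℂ) (hS : Complex.I * S ≠ 0)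
    (hsq : Cφ^2 + S^2 = 1) (j : ℕ)
    (IH : 2*(Complex.I*S)*Tj = (Cφ + Complex.I*S)*(w - (Cφ - Complex.I*S)/2)^j
        - (Cφ - Complex.I*S)*(w - (Cφ + Complex.I*S)/2)^j) :
    2*(Complex.I*S)*(w*Tj + ((w - (Cφ + Complex.I*S)/2)^j - (w - (Cφ - Complex.I*S)/2)^j)/(Complex.I*S) * ((Cφ^2+S^2)/4)) =
      (Cφ+Complex.I*S)*(w - (Cφ - Complex.I*S)/2)^(j+1) - (Cφ-Complex.I*S)*(w - (Cφ + Complex.I*S)/2)^(j+1) := by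
  have hfact : (Cφ + Complex.I*S)*(Cφ - Complex.I*S) = 1 := by
    linear_combination hsq - S^2 * Complex.I_sq
  have h2 : (2:ℂ)*(Complex.I*S) * ((((w - (Cφ + Complex.I*S)/2)^j - (w - (Cφ - Complex.I*S)/2)^j))/(Complex.I*S) * ((Cφ^2+S^2)/4)) = ((w - (Cφ + Complex.I*S)/2)^j - (w - (Cφ - Complex.I*S)/2)^j)/2 := by
    rw [hsq]
    have hS0 : S ≠ 0 := right_ne_zero_of_mul hS
    field_simp
    ring
  calc 2*(Complex.I*S)*(w*Tj + ((w - (Cφ + Complex.I*S)/2)^j - (w - (Cφ - Complex.I*S)/2)^j)/(Complex.I*S) * ((Cφ^2+S^2)/4))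
      = w*(2*(Complex.I*S)*Tj) + (2:ℂ)*(Complex.I*S) * ((((w - (Cφ + Complex.I*S)/2)^j - (w - (Cφ - Complex.I*S)/2)^j))/(Complex.I*S) * ((Cφ^2+S^2)/4)) := by ring
    _ = (Cφ+Complex.I*S)*(w - (Cφ - Complex.I*S)/2)^(j+1) - (Cφ-Complex.I*S)*(w - (Cφ + Complex.I*S)/2)^(j+1) := by
        rw [IH, h2, pow_succ, pow_succ]
        linear_combination (-((w - (Cφ + Complex.I*S)/2)^j - (w - (Cφ - Complex.I*S)/2)^j)/2) * hfact

/-- If T : ℕ → (ℝ × ℝ × ℝ → ℂ) satisfies T₁(u,v,w) = w and the stated recursion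
(for v ≠ 0), then for every k ≥ 1 and real θ with sin(θ/2) ≠ 0 and sin(kθ/2) ≠ 0,
setting φ = kθ/2 and w = −(1/2)·sin((k−1)θ/2)/sin(θ/2), one has
T_k(cos φ, sin φ, w) = 0. -/
theorem tangential_vanishes (T : ℕ → ℝ × ℝ × ℝ → ℂ)
    (h1 : ∀ u v w : ℝ, T 1 (u, v, w) = (w : ℂ))
    (hrec : ∀ k : ℕ, 1 ≤ k → ∀ u v w : ℝ, v ≠ 0 →
      T (k + 1) (u, v, w) =
        (w : ℂ) * T k (u, v, w) +
          (((w : ℂ) - ((u : ℂ) + Complex.I * (v : ℂ)) / 2) ^ k -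
              ((w : ℂ) - ((u : ℂ) - Complex.I * (v : ℂ)) / 2) ^ k) / (Complex.I * (v : ℂ)) *
            (((u : ℂ) ^ 2 + (v : ℂ) ^ 2) / 4)) :
    ∀ k : ℕ, 1 ≤ k → ∀ θ : ℝ, Real.sin (θ / 2) ≠ 0 → Real.sin ((k : ℝ) * θ / 2) ≠ 0 →
      T k (Real.cos ((k : ℝ) * θ / 2), Real.sin ((k : ℝ) * θ / 2),
          -(1 / 2) * Real.sin (((k : ℝ) - 1) * θ / 2) / Real.sin (θ / 2)) = 0 := by
  intro k hk θ hs hS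
  set sr : ℝ := Real.sin (θ/2) with hsr
  set cr : ℝ := Real.cos (θ/2) with hcr
  set u : ℝ := Real.cos ((k:ℝ)*θ/2) with hu
  set v : ℝ := Real.sin ((k:ℝ)*θ/2) with hv
  set w : ℝ := -(1/2) * Real.sin (((k:ℝ)-1)*θ/2) / sr with hw
  have hsC : ((sr : ℝ) : ℂ) ≠ 0 := Complex.ofReal_ne_zero.mpr hs
  have hvC : ((v:ℝ) : ℂ) ≠ 0 := Complex.ofReal_ne_zero.mpr hS
  have hIS : Complex.I * ((v:ℝ) : ℂ) ≠ 0 := mul_ne_zero Complex.I_ne_zero hvC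
  have hsq : ((u:ℝ) : ℂ)^2 + ((v:ℝ) : ℂ)^2 = 1 := by
    have := Real.cos_sq_add_sin_sq ((k:ℝ)*θ/2)
    rw [← hu, ← hv] at this
    exact_mod_cast this
  have key : ∀ j : ℕ, 1 ≤ j → 2*(Complex.I*(v:ℂ))*T j (u,v,w)
      = ((u:ℂ) + Complex.I*(v:ℂ))*((w:ℂ) - ((u:ℂ) - Complex.I*(v:ℂ))/2)^j
        - ((u:ℂ) - Complex.I*(v:ℂ))*((w:ℂ) - ((u:ℂ) + Complex.I*(v:ℂ))/2)^j := by
    intro j hj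
    induction j, hj using Nat.le_induction with
    | base =>
        rw [h1 u v w]
        ring
    | succ n hn IH =>
        rw [hrec n hn u v w hS]
        exact tangential_step (w:ℂ) (u:ℂ) (v:ℂ) (T n (u,v,w)) hIS hsq n IH
  -- closed form of the two roots
  set E : ℂ := Complex.exp (((θ/2 : ℝ) : ℂ) * Complex.I) with hEdef
  set E' : ℂ := Complex.exp (((-(θ/2) : ℝ) : ℂ) * Complex.I) with hE'def
  set c : ℂ := -((v:ℝ) : ℂ)/(2*((sr : ℝ) : ℂ)) with hcdef
  have hE : E = ((cr : ℝ) : ℂ) + ((sr : ℝ) : ℂ)*Complex.I := by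
    rw [hEdef, Complex.exp_mul_I, ← Complex.ofReal_cos, ← Complex.ofReal_sin, ← hsr, ← hcr]
  have hE' : E' = ((cr : ℝ) : ℂ) - ((sr : ℝ) : ℂ)*Complex.I := by
    rw [hE'def, Complex.exp_mul_I, ← Complex.ofReal_cos, ← Complex.ofReal_sin,
      Real.cos_neg, Real.sin_neg, ← hsr, ← hcr]
    push_cast
    ring
  have hsin : Real.sin (((k:ℝ)-1)*θ/2) = v * cr - u * sr := by
    rw [show ((k:ℝ)-1)*θ/2 = (k:ℝ)*θ/2 - θ/2 by ring, Real.sin_sub, ← hv, ← hcr, ← hu, ← hsr]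
  have ha : (w:ℂ) - ((u:ℂ) + Complex.I*(v:ℂ))/2 = c * E := by
    rw [hE, hcdef, hw, hsin]
    push_cast
    field_simp
    ring
  have hb : (w:ℂ) - ((u:ℂ) - Complex.I*(v:ℂ))/2 = c * E' := by
    rw [hE', hcdef, hw, hsin]
    push_cast
    field_simp
    ring
  have hEk : E^k = (u:ℂ) + Complex.I*(v:ℂ) := by
    rw [hEdef, ← Complex.exp_nat_mul,
      show (k:ℂ) * (((θ/2 : ℝ) : ℂ) * Complex.I) = (((k:ℝ)*θ/2 : ℝ) : ℂ) * Complex.I by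
        push_cast; ring,
      Complex.exp_mul_I, ← Complex.ofReal_cos, ← Complex.ofReal_sin, ← hu, ← hv]
    ring
  have hE'k : E'^k = (u:ℂ) - Complex.I*(v:ℂ) := by
    rw [hE'def, ← Complex.exp_nat_mul,
      show (k:ℂ) * (((-(θ/2) : ℝ) : ℂ) * Complex.I) = ((-((k:ℝ)*θ/2) : ℝ) : ℂ) * Complex.I by
        push_cast; ring,
      Complex.exp_mul_I, ← Complex.ofReal_cos, ← Complex.ofReal_sin,
      Real.cos_neg, Real.sin_neg, ← hu, ← hv]
    push_cast
    ring
  have h0 : ((u:ℂ) + Complex.I*(v:ℂ))*((w:ℂ) - ((u:ℂ) - Complex.I*(v:ℂ))/2)^k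
        - ((u:ℂ) - Complex.I*(v:ℂ))*((w:ℂ) - ((u:ℂ) + Complex.I*(v:ℂ))/2)^k = 0 := by
    rw [ha, hb, mul_pow, mul_pow, hEk, hE'k]
    ring
  have hfin := key k hk
  rw [h0] at hfin
  have h2 : (2:ℂ)*(Complex.I*((v:ℝ):ℂ)) ≠ 0 := mul_ne_zero two_ne_zero hIS
  exact (mul_eq_zero.mp hfin).resolve_left h2
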